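/- Let d = (7 − √21)/14. Let x, y, e₀, e, f, q₀ be real numbers with x ∈ [1−d, 1], y ∈ [1−d, 1], e₀ ∈ [x−d, x], e ∈ [x+y−1, 1], f ∈ [y−d, y], q₀ ∈ [e+e₀−x, 1]. Define Ŵ₅(x,y,e₀,e,f,q₀) = e₀·max(e₀−e, 0)/(q₀·e) + e₀²·q₀·max(f−e, 0)/((q₀+f−y)·(e+f−y)·e·f) + e₀·max(e₀−e, 0)/((q₀+f−y)·e). Then Ŵ₅(x,y,e₀,e,f,q₀) ≤ Ŵ₅(x,y,e₀,e,f,e+e₀−x). -/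
import Mathlib


/-- The objective function `Ŵ₅` of program (P5). -/
noncomputable def W5hat (x y e₀ e f q₀ : ℝ) : ℝ :=
  e₀ * max (e₀ - e) 0 / (q₀ * e)
    + e₀ ^ 2 * q₀ * max (f - e) 0 / ((q₀ + f - y) * (e + f - y) * e * f)
    + e₀ * max (e₀ - e) 0 / ((q₀ + f - y) * e)

/-- Under the constraints of program (P5) with `d = (7−√21)/14`,
the objective `Ŵ₅` does not decrease when `q₀` is replaced by its lower bound
`e + e₀ − x`. -/
theorem W5hat_le (d x y e₀ e f q₀ : ℝ)
    (hd : d = (7 - Real.sqrt 21) / 14)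
    (hx : x ∈ Set.Icc (1 - d) 1) (hy : y ∈ Set.Icc (1 - d) 1)
    (he₀ : e₀ ∈ Set.Icc (x - d) x) (he : e ∈ Set.Icc (x + y - 1) 1)
    (hf : f ∈ Set.Icc (y - d) y) (hq₀ : q₀ ∈ Set.Icc (e + e₀ - x) 1) :
    W5hat x y e₀ e f q₀ ≤ W5hat x y e₀ e f (e + e₀ - x) := by
  obtain ⟨hx1, hx2⟩ := hx
  obtain ⟨hy1, hy2⟩ := hy
  obtain ⟨he₀1, he₀2⟩ := he₀
  obtain ⟨he1, he2⟩ := he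
  obtain ⟨hf1, hf2⟩ := hf
  obtain ⟨hq1, hq2⟩ := hq₀
  have hs : Real.sqrt 21 > 7/2 := by
    nlinarith [Real.sq_sqrt (by norm_num : (0:ℝ) ≤ 21), Real.sqrt_nonneg 21]
  have hd4 : d < 1/4 := by rw [hd]; linarith
  have hepos : 0 < e := by linarith
  have he₀pos : 0 < e₀ := by linarith
  have hfpos : 0 < f := by linarith
  have hapos : 0 < e + e₀ - x := by linarith
  have hq₀pos : 0 < q₀ := by linarith
  have hafy : 0 < e + e₀ - x + f - y := by linarith
  have hqfy : 0 < q₀ + f - y := by linarith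
  have hefy : 0 < e + f - y := by linarith
  have hM : 0 ≤ max (e₀ - e) 0 := le_max_right _ _
  have hM' : 0 ≤ max (f - e) 0 := le_max_right _ _
  unfold W5hat
  have t1 : e₀ * max (e₀ - e) 0 / (q₀ * e) ≤ e₀ * max (e₀ - e) 0 / ((e + e₀ - x) * e) := by
    apply div_le_div_of_nonneg_left (by positivity) (by positivity)
    nlinarith
  have t3 : e₀ * max (e₀ - e) 0 / ((q₀ + f - y) * e)
      ≤ e₀ * max (e₀ - e) 0 / ((e + e₀ - x + f - y) * e) := by
    apply div_le_div_of_nonneg_left (by positivity) (by positivity)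
    nlinarith
  have t2 : e₀ ^ 2 * q₀ * max (f - e) 0 / ((q₀ + f - y) * (e + f - y) * e * f)
      ≤ e₀ ^ 2 * (e + e₀ - x) * max (f - e) 0
        / ((e + e₀ - x + f - y) * (e + f - y) * e * f) := by
    rw [div_le_div_iff₀ (by positivity) (by positivity)]
    have hfy : f - y ≤ 0 := by linarith
    nlinarith [mul_nonneg (mul_nonneg (sq_nonneg e₀) hM')
        (mul_nonneg (mul_nonneg hefy.le hepos.le) hfpos.le),
      mul_nonneg (sub_nonneg.2 hq1) (neg_nonneg.2 hfy)]
  have : e + e₀ - x + f - y = (e + e₀ - x) + f - y := by ring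
  rw [this] at t2 t3
  linarith
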